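/- arXiv:2409.10934 — 3 statements merged into one kernel-verified Lean document; each statement's English description precedes it below -/
import Mathlib

section
/- Let g : Z → ℝ be η-weakly convex and continuous on a Euclidean space Z, and let μ ∈ (0, 1/η). Then the gradient of the Moreau envelope, ∇g^μ(z̄) = (z̄ - prox_{μg}(z̄))/μ, is Lipschitz continuous with Lipschitz constant max{1/μ, η/(1 - μη)}. -/
open Filter Topology RealInnerProductSpace

private lemma combo_norm_sq {Z : Type*} [NormedAddCommGroup Z] [InnerProductSpace ℝ Z]
    (p z : Z) (t : ℝ) :
    ‖(1-t)•p + t•z‖^2 = (1-t)*‖p‖^2 + t*‖z‖^2 - t*(1-t)*‖z-p‖^2 := by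
  rw [← real_inner_self_eq_norm_sq, ← real_inner_self_eq_norm_sq,
    ← real_inner_self_eq_norm_sq, ← real_inner_self_eq_norm_sq]
  simp only [inner_add_left, inner_add_right, inner_sub_left, inner_sub_right,
    real_inner_smul_left, real_inner_smul_right]
  rw [real_inner_comm z p]
  ring

private lemma expand4 {Z : Type*} [NormedAddCommGroup Z] [InnerProductSpace ℝ Z]
    (p₁ p₂ z₁ z₂ : Z) :
    ‖p₂ - z₁‖^2 + ‖p₁ - z₂‖^2 - ‖p₁ - z₁‖^2 - ‖p₂ - z₂‖^2
      = 2 * ⟪p₁ - p₂, z₁ - z₂⟫ := by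
  rw [← real_inner_self_eq_norm_sq, ← real_inner_self_eq_norm_sq,
    ← real_inner_self_eq_norm_sq, ← real_inner_self_eq_norm_sq]
  simp only [inner_sub_left, inner_sub_right]
  rw [real_inner_comm z₁ p₂, real_inner_comm z₂ p₁, real_inner_comm z₁ p₁,
    real_inner_comm z₂ p₂]
  ring

private lemma sqle (a b : ℝ) (hb : 0 ≤ b) (h : a^2 ≤ b^2) : a ≤ b := by
  nlinarith

set_option maxHeartbeats 1000000 in
/-- For `g` η-weakly convex and continuous and `μ ∈ (0, 1/η)`,
the gradient of the Moreau envelope, `∇g^μ(zb) = (zb - prox_{μg}(zb))/μ`, is Lipschitz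
with constant `max {1/μ, η/(1 - μη)}`. -/
theorem stmt6 {Z : Type*} [NormedAddCommGroup Z] [InnerProductSpace ℝ Z]
    [FiniteDimensional ℝ Z]
    (g : Z → ℝ) (η : ℝ) (hη : 0 < η)
    (hwc : ConvexOn ℝ Set.univ (fun z => g z + (η / 2) * ‖z‖ ^ 2))
    (hcont : Continuous g)
    (μ : ℝ) (hμ : μ ∈ Set.Ioo (0 : ℝ) (1 / η))
    (P : Z → Z)
    (hP : ∀ zb z : Z,
      g (P zb) + (1 / (2 * μ)) * ‖P zb - zb‖ ^ 2 ≤ g z + (1 / (2 * μ)) * ‖z - zb‖ ^ 2) :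
    ∀ z₁ z₂ : Z,
      ‖μ⁻¹ • (z₁ - P z₁) - μ⁻¹ • (z₂ - P z₂)‖ ≤
        max (1 / μ) (η / (1 - μ * η)) * ‖z₁ - z₂‖ := by
  obtain ⟨hμ0, hμ1⟩ := hμ
  have hμη : μ * η < 1 := (lt_div_iff₀ hη).mp hμ1
  set σ : ℝ := 1/μ - η with hσdef
  have hσ : 0 < σ := by
    rw [hσdef, sub_pos, lt_div_iff₀ hμ0]; linarith
  -- quadratic growth at the minimizer
  have QG : ∀ zb z : Z, g (P zb) + (1/(2*μ))*‖P zb - zb‖^2 + (σ/2)*‖z - P zb‖^2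
      ≤ g z + (1/(2*μ))*‖z - zb‖^2 := by
    intro zb z
    set p := P zb with hp
    have key : ∀ t ∈ Set.Ioo (0:ℝ) 1,
        (σ/2)*(1-t)*‖z - p‖^2
          ≤ (g z + (1/(2*μ))*‖z-zb‖^2) - (g p + (1/(2*μ))*‖p - zb‖^2) := by
      rintro t ⟨ht0, ht1⟩
      set w := (1-t)•p + t•z with hwdef
      have hconv := hwc.2 (Set.mem_univ p) (Set.mem_univ z)
        (by linarith : (0:ℝ) ≤ 1-t) ht0.le (by ring)
      simp only [smul_eq_mul] at hconv
      have hw1 : ‖w‖^2 = (1-t)*‖p‖^2 + t*‖z‖^2 - t*(1-t)*‖z-p‖^2 := combo_norm_sq p z t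
      have hw2 : ‖w - zb‖^2 = (1-t)*‖p-zb‖^2 + t*‖z-zb‖^2 - t*(1-t)*‖z-p‖^2 := by
        have h := combo_norm_sq (p - zb) (z - zb) t
        have hww : w - zb = (1-t)•(p-zb) + t•(z-zb) := by
          rw [hwdef]; module
        rw [hww, h, sub_sub_sub_cancel_right]
      have hmin := hP zb w
      rw [← hp, hw2] at hmin
      rw [← hwdef, hw1] at hconv
      have h2 : t * ((σ/2)*(1-t)*‖z-p‖^2)
          ≤ t * ((g z + (1/(2*μ))*‖z-zb‖^2) - (g p + (1/(2*μ))*‖p - zb‖^2)) := by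
        rw [hσdef]
        have hμne : μ ≠ 0 := ne_of_gt hμ0
        have hexp : (1:ℝ)/(2*μ) = 1/μ/2 := by ring
        rw [hexp] at hmin ⊢
        linarith [hmin, hconv]
      exact le_of_mul_le_mul_left h2 ht0
    have hne : (𝓝[Set.Ioo (0:ℝ) 1] (0:ℝ)).NeBot := by
      apply mem_closure_iff_nhdsWithin_neBot.mp
      rw [closure_Ioo (by norm_num : (0:ℝ) ≠ 1)]
      exact ⟨le_refl 0, by norm_num⟩
    have htend : Tendsto (fun t : ℝ => (σ/2)*(1-t)*‖z - p‖^2)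
        (𝓝[Set.Ioo (0:ℝ) 1] 0) (𝓝 ((σ/2)*‖z - p‖^2)) := by
      have hc : ContinuousWithinAt (fun t : ℝ => (σ/2)*(1-t)*‖z - p‖^2)
          (Set.Ioo (0:ℝ) 1) 0 :=
        Continuous.continuousWithinAt (by continuity)
      simpa using hc.tendsto
    have hle := le_of_tendsto htend (eventually_nhdsWithin_of_forall key)
    linarith
  intro z₁ z₂
  have q1 := QG z₁ (P z₂)
  have q2 := QG z₂ (P z₁)
  set p₁ := P z₁ with hp1
  set p₂ := P z₂ with hp2
  have hid := expand4 p₁ p₂ z₁ z₂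
  have hrev2 : ‖p₂ - p₁‖^2 = ‖p₁ - p₂‖^2 := by rw [norm_sub_rev]
  have hinner : (1 - μ*η) * ‖p₁ - p₂‖^2 ≤ ⟪p₁ - p₂, z₁ - z₂⟫ := by
    have hsum : σ * ‖p₁ - p₂‖^2 ≤ (1/(2*μ)) * (2 * ⟪p₁ - p₂, z₁ - z₂⟫) := by
      rw [hrev2] at q1
      rw [← hid]; linarith [q1, q2]
    have hμσ : μ * σ = 1 - μ*η := by rw [hσdef]; field_simp
    have := mul_le_mul_of_nonneg_left hsum hμ0.le
    calc (1 - μ*η) * ‖p₁ - p₂‖^2 = μ * (σ * ‖p₁ - p₂‖^2) := by rw [← mul_assoc, hμσ]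
      _ ≤ μ * ((1/(2*μ)) * (2 * ⟪p₁ - p₂, z₁ - z₂⟫)) := this
      _ = ⟪p₁ - p₂, z₁ - z₂⟫ := by field_simp
  set d := z₁ - z₂ with hd
  set e := p₁ - p₂ with he
  set c : ℝ := 1 - μ*η with hcdef
  have hc0 : 0 < c := by rw [hcdef]; linarith
  have hc1 : c < 1 := by rw [hcdef]; nlinarith
  have h1c : 1 - c = μ*η := by rw [hcdef]; ring
  have hsq : ‖d - e‖^2 = ‖d‖^2 - 2*⟪e, d⟫ + ‖e‖^2 := by
    rw [← real_inner_self_eq_norm_sq, ← real_inner_self_eq_norm_sq,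
      ← real_inner_self_eq_norm_sq]
    simp only [inner_sub_left, inner_sub_right]
    rw [real_inner_comm d e]
    ring
  have h4 : c * ‖e‖^2 ≤ ⟪e, d⟫ := hinner
  have hgoal : μ⁻¹ • (z₁ - p₁) - μ⁻¹ • (z₂ - p₂) = μ⁻¹ • (d - e) := by
    rw [← smul_sub]; congr 1; rw [hd, he]; abel
  rw [hgoal, norm_smul, Real.norm_eq_abs, abs_of_pos (by positivity : (0:ℝ) < μ⁻¹)]
  clear hP QG hwc hcont q1 q2 hid hinner hgoal hrev2
  clear_value σ p₁ p₂ d e c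
  clear hp1 hp2 hd he hσdef hcdef hσ
  rcases le_or_gt (1/2 : ℝ) c with hc | hc
  · -- c ≥ 1/2 : nonexpansive case
    have hA : 0 ≤ (2*c - 1) * ‖e‖^2 := mul_nonneg (by linarith) (sq_nonneg _)
    have hle2 : ‖d - e‖^2 ≤ ‖d‖^2 := by nlinarith [hsq, h4, hA]
    have hle : ‖d - e‖ ≤ ‖d‖ := sqle _ _ (norm_nonneg _) hle2
    calc μ⁻¹ * ‖d - e‖ ≤ μ⁻¹ * ‖d‖ :=
          mul_le_mul_of_nonneg_left hle (by positivity)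
      _ = (1/μ) * ‖d‖ := by ring
      _ ≤ max (1/μ) (η/c) * ‖d‖ :=
          mul_le_mul_of_nonneg_right (le_max_left _ _) (norm_nonneg _)
  · -- c < 1/2
    have hCS : ⟪e, d⟫ ≤ ‖e‖ * ‖d‖ := real_inner_le_norm e d
    have hCe : c * ‖e‖ ≤ ‖d‖ := by
      rcases ((norm_nonneg e).eq_or_lt.imp_left Eq.symm) with h0 | h0
      · rw [h0, mul_zero]; exact norm_nonneg d
      · have hh : c * ‖e‖ * ‖e‖ ≤ ‖d‖ * ‖e‖ := by nlinarith [h4, hCS]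
        exact le_of_mul_le_mul_right hh h0
    have hdce : 0 ≤ ‖d‖^2 - (c*‖e‖)^2 := by
      nlinarith [hCe, mul_nonneg hc0.le (norm_nonneg e)]
    have hA : 0 ≤ (1 - 2*c) * (‖d‖^2 - (c*‖e‖)^2) :=
      mul_nonneg (by linarith) hdce
    have hB : 0 ≤ (⟪e, d⟫ - c*‖e‖^2) * c^2 :=
      mul_nonneg (by linarith [h4]) (sq_nonneg _)
    have hsq2 : c^2 * ‖d - e‖^2 = c^2 * (‖d‖^2 - 2*⟪e, d⟫ + ‖e‖^2) := by rw [hsq]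
    have key2 : (c*‖d - e‖)^2 ≤ ((1-c)*‖d‖)^2 := by nlinarith [hsq2, hA, hB]
    have hd2 : c * ‖d - e‖ ≤ (1-c)*‖d‖ :=
      sqle _ _ (mul_nonneg (by linarith) (norm_nonneg _)) key2
    have hd3 : ‖d - e‖ ≤ (1-c)/c * ‖d‖ := by
      rw [div_mul_eq_mul_div, le_div_iff₀ hc0]; linarith
    calc μ⁻¹ * ‖d - e‖ ≤ μ⁻¹ * ((1-c)/c * ‖d‖) :=
          mul_le_mul_of_nonneg_left hd3 (by positivity)
      _ = (η/c) * ‖d‖ := by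
          rw [h1c]; field_simp
      _ ≤ max (1/μ) (η/c) * ‖d‖ :=
          mul_le_mul_of_nonneg_right (le_max_right _ _) (norm_nonneg _)
end

section
/- Let X be a Euclidean space, f : X → ℝ differentiable with L-Lipschitz gradient, φ : X → ℝ ∪ {+∞} proper lsc convex, and γ ∈ (0, 2(1-c)/L] for some c ∈ (0,1). Then for any x ∈ dom φ, the proximal gradient step x⁺ := prox_{γφ}(x - γ∇f(x)) satisfies the sufficient decrease (Armijo-type) inequality (f + φ)(x⁺) ≤ (f + φ)(x) - cγ · ((1/γ)‖x - x⁺‖)². -/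
variable {X : Type*} [NormedAddCommGroup X] [InnerProductSpace ℝ X]

local notation "⟪" a ", " b "⟫" => @inner ℝ _ _ a b

theorem descent_lemma [CompleteSpace X] (f : X → ℝ) (f' : X → X)
    (hf : ∀ x, HasGradientAt f (f' x) x)
    (L : ℝ) (hL : 0 ≤ L) (hLip : ∀ x y : X, ‖f' x - f' y‖ ≤ L * ‖x - y‖)
    (x y : X) : f y ≤ f x + ⟪f' x, y - x⟫ + L / 2 * ‖y - x‖ ^ 2 := by
  set d := y - x with hd
  set g : ℝ → ℝ := fun t => f (x + t • d) - t * ⟪f' x, d⟫ - L * ‖d‖ ^ 2 * t ^ 2 / 2 with hg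
  have hderiv : ∀ t : ℝ, HasDerivAt g
      (⟪f' (x + t • d), d⟫ - ⟪f' x, d⟫ - L * ‖d‖ ^ 2 * t) t := by
    intro t
    have hc : HasDerivAt (fun t : ℝ => x + t • d) d t := by
      simpa using ((hasDerivAt_id t).smul_const d).const_add x
    have h1 : HasDerivAt (fun t : ℝ => f (x + t • d)) ⟪f' (x + t • d), d⟫ t := by
      have := (hf (x + t • d)).hasFDerivAt.comp_hasDerivAt t hc
      simpa [InnerProductSpace.toDual_apply_apply, Function.comp_def] using this
    have h2 : HasDerivAt (fun t : ℝ => t * ⟪f' x, d⟫) ⟪f' x, d⟫ t := by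
      simpa using (hasDerivAt_id t).mul_const (⟪f' x, d⟫)
    have h3 : HasDerivAt (fun t : ℝ => L * ‖d‖ ^ 2 * t ^ 2 / 2) (L * ‖d‖ ^ 2 * t) t := by
      have := ((hasDerivAt_pow 2 t).const_mul (L * ‖d‖ ^ 2)).div_const 2
      convert this using 1
      · rfl
      · rfl
      · ring
    exact (h1.sub h2).sub h3
  have hmono : AntitoneOn g (Set.Icc 0 1) := by
    apply antitoneOn_of_deriv_nonpos (convex_Icc 0 1)
    · exact (fun t _ => ((hderiv t).continuousAt.continuousWithinAt))
    · intro t ht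
      exact ((hderiv t).differentiableAt.differentiableWithinAt)
    · intro t ht
      rw [interior_Icc] at ht
      rw [(hderiv t).deriv]
      have h1 : ⟪f' (x + t • d), d⟫ - ⟪f' x, d⟫ = ⟪f' (x + t • d) - f' x, d⟫ := by
        rw [inner_sub_left]
      have h2 : ⟪f' (x + t • d) - f' x, d⟫ ≤ ‖f' (x + t • d) - f' x‖ * ‖d‖ :=
        real_inner_le_norm _ _
      have h3 : ‖f' (x + t • d) - f' x‖ ≤ L * ‖t • d‖ := by
        simpa using hLip (x + t • d) x
      have h4 : ‖t • d‖ = t * ‖d‖ := by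
        rw [norm_smul, Real.norm_eq_abs, abs_of_pos ht.1]
      nlinarith [norm_nonneg d, mul_nonneg hL (norm_nonneg d), ht.1.le]
  have := hmono (Set.left_mem_Icc.2 zero_le_one) (Set.right_mem_Icc.2 zero_le_one) zero_le_one
  simp only [hg] at this
  have hy : x + (1 : ℝ) • d = y := by simp [hd]
  rw [hy] at this
  simp at this
  linarith

/-- `φ` is proper: somewhere finite and nowhere `⊥`. -/
def ProperFun (φ : X → EReal) : Prop := (∃ x, φ x ≠ ⊤) ∧ ∀ x, φ x ≠ ⊥

/-- Convexity for an extended-real-valued function. -/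
def ConvexFunE (φ : X → EReal) : Prop :=
  ∀ x y : X, ∀ t : ℝ, 0 ≤ t → t ≤ 1 →
    φ (t • x + (1 - t) • y) ≤ (t : EReal) * φ x + ((1 - t : ℝ) : EReal) * φ y

/-- `p` is the value of `prox_{γφ}` at `y`. -/
def IsProx (φ : X → EReal) (γ : ℝ) (y p : X) : Prop :=
  ∀ x : X, φ p + (((1 / (2 * γ)) * ‖p - y‖ ^ 2 : ℝ) : EReal) ≤
    φ x + (((1 / (2 * γ)) * ‖x - y‖ ^ 2 : ℝ) : EReal)

/-- sufficient decrease of the proximal gradient step. If `∇f` is `L`-Lipschitz,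
`c ∈ (0,1)`, `γ ∈ (0, 2(1-c)/L]`, `x ∈ dom φ` and `x⁺ = prox_{γφ}(x - γ∇f(x))`, then
`(f+φ)(x⁺) ≤ (f+φ)(x) - cγ((1/γ)‖x - x⁺‖)²`. -/
theorem stmt11 [FiniteDimensional ℝ X]
    (f : X → ℝ) (f' : X → X) (hf : ∀ x, HasGradientAt f (f' x) x)
    (L : ℝ) (hL : 0 < L) (hLip : ∀ x y : X, ‖f' x - f' y‖ ≤ L * ‖x - y‖)
    (φ : X → EReal) (hproper : ProperFun φ) (hlsc : LowerSemicontinuous φ)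
    (hconv : ConvexFunE φ)
    (c : ℝ) (hc : c ∈ Set.Ioo (0 : ℝ) 1)
    (γ : ℝ) (hγ : γ ∈ Set.Ioc (0 : ℝ) (2 * (1 - c) / L))
    (x : X) (hx : φ x ≠ ⊤)
    (xp : X) (hxp : IsProx φ γ (x - γ • f' x) xp) :
    (f xp : EReal) + φ xp ≤
      (f x : EReal) + φ x - ((c * γ * ((1 / γ) * ‖x - xp‖) ^ 2 : ℝ) : EReal) := by
  obtain ⟨hγ0, hγ2⟩ := hγ
  obtain ⟨hc0, hc1⟩ := hc
  set y := x - γ • f' x with hy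
  set d := x - xp with hd
  set px := (φ x).toReal with hpx
  have hxc : φ x = (px : EReal) := (EReal.coe_toReal hx (hproper.2 x)).symm
  -- φ xp is finite
  have hxpt : φ xp ≠ ⊤ := by
    intro h
    have := hxp x
    rw [h, hxc] at this
    rw [EReal.top_add_of_ne_bot (by exact EReal.coe_ne_bot _)] at this
    rw [← EReal.coe_add] at this
    exact (EReal.coe_ne_top _) (top_le_iff.mp this)
  set pxp := (φ xp).toReal with hpxp
  have hxpc : φ xp = (pxp : EReal) := (EReal.coe_toReal hxpt (hproper.2 xp)).symm
  -- prox subgradient inequality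
  have key : pxp - px ≤ (1 / γ) * ⟪xp - y, d⟫ := by
    have hstep : ∀ t : ℝ, t ∈ Set.Ioc (0 : ℝ) 1 →
        pxp - px ≤ (1 / γ) * ⟪xp - y, d⟫ + t * (‖d‖ ^ 2 / (2 * γ)) := by
      intro t ⟨ht0, ht1⟩
      have hconvz := hconv x xp t ht0.le ht1
      set z := t • x + (1 - t) • xp with hz
      have hzv : φ z ≤ ((t * px + (1 - t) * pxp : ℝ) : EReal) := by
        rw [hxc, hxpc] at hconvz
        calc φ z ≤ (t : EReal) * (px : EReal) + ((1 - t : ℝ) : EReal) * (pxp : EReal) := hconvz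
          _ = ((t * px + (1 - t) * pxp : ℝ) : EReal) := by
              rw [← EReal.coe_mul, ← EReal.coe_mul, ← EReal.coe_add]
      have hprox := hxp z
      rw [hxpc] at hprox
      have hprox2 : (pxp : EReal) + (((1 / (2 * γ)) * ‖xp - y‖ ^ 2 : ℝ) : EReal) ≤
          ((t * px + (1 - t) * pxp + (1 / (2 * γ)) * ‖z - y‖ ^ 2 : ℝ) : EReal) := by
        calc (pxp : EReal) + (((1 / (2 * γ)) * ‖xp - y‖ ^ 2 : ℝ) : EReal)
            ≤ φ z + (((1 / (2 * γ)) * ‖z - y‖ ^ 2 : ℝ) : EReal) := hprox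
          _ ≤ ((t * px + (1 - t) * pxp : ℝ) : EReal) + (((1 / (2 * γ)) * ‖z - y‖ ^ 2 : ℝ) : EReal) := by
              exact add_le_add_left hzv _
          _ = _ := by rw [← EReal.coe_add]
      rw [← EReal.coe_add, EReal.coe_le_coe_iff] at hprox2
      -- expand ‖z - y‖²
      have hzy : z - y = (xp - y) + t • d := by
        rw [hz, hd]; module
      have hexp : ‖z - y‖ ^ 2 = ‖xp - y‖ ^ 2 + 2 * t * ⟪xp - y, d⟫ + t ^ 2 * ‖d‖ ^ 2 := by
        rw [hzy, norm_add_sq_real, real_inner_smul_right, norm_smul, Real.norm_eq_abs,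
          abs_of_pos ht0, mul_pow]
        ring
      rw [hexp] at hprox2
      have hgain : 1 / (2 * γ) * (‖xp - y‖ ^ 2 + 2 * t * ⟪xp - y, d⟫ + t ^ 2 * ‖d‖ ^ 2)
          = 1 / (2 * γ) * ‖xp - y‖ ^ 2 + t * ((1 / γ) * ⟪xp - y, d⟫ + t * (‖d‖ ^ 2 / (2 * γ))) := by
        field_simp; ring
      rw [hgain] at hprox2
      have h5 : t * (pxp - px) ≤ t * ((1 / γ) * ⟪xp - y, d⟫ + t * (‖d‖ ^ 2 / (2 * γ))) := by
        nlinarith [hprox2]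
      exact (mul_le_mul_iff_right₀ ht0).mp h5
    -- take the limit t → 0⁺
    have htend : Filter.Tendsto (fun t : ℝ => (1 / γ) * ⟪xp - y, d⟫ + t * (‖d‖ ^ 2 / (2 * γ)))
        (nhdsWithin 0 (Set.Ioi 0)) (nhds ((1 / γ) * ⟪xp - y, d⟫)) := by
      have : Filter.Tendsto (fun t : ℝ => (1 / γ) * ⟪xp - y, d⟫ + t * (‖d‖ ^ 2 / (2 * γ)))
          (nhds 0) (nhds ((1 / γ) * ⟪xp - y, d⟫ + 0 * (‖d‖ ^ 2 / (2 * γ)))) := by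
        exact (tendsto_const_nhds.add ((continuous_id.mul continuous_const).tendsto 0))
      simpa using this.mono_left nhdsWithin_le_nhds
    refine ge_of_tendsto htend ?_
    filter_upwards [Ioc_mem_nhdsGT_of_mem (Set.left_mem_Ico.mpr zero_lt_one)] with t ht
    exact hstep t ht
  -- expand ⟪xp - y, d⟫
  have hinner : ⟪xp - y, d⟫ = -‖d‖ ^ 2 + γ * ⟪f' x, d⟫ := by
    have : xp - y = -d + γ • f' x := by rw [hy, hd]; module
    rw [this, inner_add_left, real_inner_smul_left, inner_neg_left, real_inner_self_eq_norm_sq]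
  -- descent lemma
  have hdesc := descent_lemma f f' hf L hL.le hLip x xp
  have hdesc2 : f xp ≤ f x - ⟪f' x, d⟫ + L / 2 * ‖d‖ ^ 2 := by
    have e1 : ⟪f' x, xp - x⟫ = -⟪f' x, d⟫ := by rw [hd, ← inner_neg_right]; congr 1; abel
    have e2 : ‖xp - x‖ = ‖d‖ := by rw [hd, norm_sub_rev]
    rw [e1, e2] at hdesc; linarith
  -- combine, in reals
  have hγL : γ * L ≤ 2 * (1 - c) := by
    rw [le_div_iff₀ hL] at hγ2; linarith
  have hK : c * γ * ((1 / γ) * ‖d‖) ^ 2 = c * ‖d‖ ^ 2 / γ := by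
    field_simp
  have hfinal : f xp + pxp ≤ f x + px - c * γ * ((1 / γ) * ‖d‖) ^ 2 := by
    rw [hK]
    have hkey2 : pxp ≤ px + (1 / γ) * (-‖d‖ ^ 2 + γ * ⟪f' x, d⟫) := by
      rw [← hinner]; linarith
    have h1γ : (1 / γ) * (-‖d‖ ^ 2 + γ * ⟪f' x, d⟫) = -‖d‖ ^ 2 / γ + ⟪f' x, d⟫ := by
      field_simp
    rw [h1γ] at hkey2
    have hq : L / 2 * ‖d‖ ^ 2 - ‖d‖ ^ 2 / γ ≤ -(c * ‖d‖ ^ 2 / γ) := by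
      have hcoef : L / 2 - (1 - c) / γ ≤ 0 := by
        rw [sub_nonpos, div_le_div_iff₀ (by norm_num : (0:ℝ) < 2) hγ0]
        nlinarith
      have h := mul_nonpos_iff.mpr (Or.inr ⟨hcoef, sq_nonneg ‖d‖⟩)
      have e : (L / 2 - (1 - c) / γ) * ‖d‖ ^ 2
          = L / 2 * ‖d‖ ^ 2 - ‖d‖ ^ 2 / γ + c * ‖d‖ ^ 2 / γ := by
        field_simp; ring
      rw [e] at h
      linarith
    clear_value d y px pxp
    obtain ⟨I, hI⟩ : ∃ I : ℝ, ⟪f' x, d⟫ = I := ⟨_, rfl⟩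
    rw [hI] at hdesc2 hkey2
    obtain ⟨n, hn⟩ : ∃ n : ℝ, ‖d‖ = n := ⟨_, rfl⟩
    rw [hn] at hdesc2 hkey2 hq ⊢
    have t1 := add_le_add hdesc2 hkey2
    ring_nf at t1 hq ⊢
    linarith [t1, hq]
  -- back to EReal
  rw [hxc, hxpc, ← EReal.coe_add, ← EReal.coe_add, ← EReal.coe_sub, EReal.coe_le_coe_iff]
  exact hfinal
end

section
/- Let g : Z → ℝ be η-weakly convex and L-Lipschitz on a Euclidean space Z, and let 0 < μ' ≤ μ ≤ 1/(2η). Then for every z ∈ Z, g^{μ'}(z) - g^{μ}(z) ≤ (μ - μ')·L²·2 (more precisely, g^{μ'}(z) - g^μ(z) ≤ (μ - μ') L²/(2(1 - μη)²) ≤ 2(μ - μ')L²), i.e., the Moreau envelopes are monotone in μ with quantitative control: g^{μ}(z) ≤ g^{μ'}(z) ≤ g^{μ}(z) + (μ - μ')L²/(2(1-μη)²). -/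
/-- monotonicity of Moreau envelopes in the index with quantitative control.
For `g` η-weakly convex and `L`-Lipschitz and `0 < μ' ≤ μ ≤ 1/(2η)`:
`g^μ(z) ≤ g^{μ'}(z) ≤ g^μ(z) + (μ - μ')L²/(2(1 - μη)²) ≤ g^μ(z) + 2(μ - μ')L²`. -/
theorem stmt12 {Z : Type*} [NormedAddCommGroup Z] [InnerProductSpace ℝ Z]
    [FiniteDimensional ℝ Z]
    (g : Z → ℝ) (η L : ℝ) (hη : 0 < η)
    (hwc : ConvexOn ℝ Set.univ (fun z => g z + (η / 2) * ‖z‖ ^ 2))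
    (hLip : ∀ z₁ z₂ : Z, |g z₁ - g z₂| ≤ L * ‖z₁ - z₂‖)
    (μ μ' : ℝ) (hμ'pos : 0 < μ') (hle : μ' ≤ μ) (hμ : μ ≤ 1 / (2 * η)) (z : Z) :
    (⨅ w : Z, (g w + (1 / (2 * μ)) * ‖w - z‖ ^ 2)) ≤
        (⨅ w : Z, (g w + (1 / (2 * μ')) * ‖w - z‖ ^ 2)) ∧
      (⨅ w : Z, (g w + (1 / (2 * μ')) * ‖w - z‖ ^ 2)) ≤
        (⨅ w : Z, (g w + (1 / (2 * μ)) * ‖w - z‖ ^ 2)) +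
          (μ - μ') * L ^ 2 / (2 * (1 - μ * η) ^ 2) ∧
      (μ - μ') * L ^ 2 / (2 * (1 - μ * η) ^ 2) ≤ 2 * (μ - μ') * L ^ 2 := by
  have hμpos : 0 < μ := lt_of_lt_of_le hμ'pos hle
  have hμη : μ * η ≤ 1 / 2 := by
    rw [le_div_iff₀ (by positivity)] at hμ; linarith
  have h1mη : (0:ℝ) < 1 - μ * η := by linarith
  have h1mη' : (1:ℝ)/2 ≤ 1 - μ * η := by linarith
  -- lower bound for both families
  have hlb : ∀ w : Z, g z - μ * L ^ 2 / 2 ≤ g w + (1 / (2 * μ)) * ‖w - z‖ ^ 2 := by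
    intro w
    have h := (abs_le.mp (hLip z w)).2
    rw [norm_sub_rev] at h
    have ht : (0:ℝ) ≤ ‖w - z‖ := norm_nonneg _
    have key : (0:ℝ) ≤ (‖w - z‖ - μ * L) ^ 2 / (2 * μ) := by positivity
    have e : (‖w - z‖ - μ * L) ^ 2 / (2 * μ)
        = (1 / (2 * μ)) * ‖w - z‖ ^ 2 - L * ‖w - z‖ + μ * L ^ 2 / 2 := by
      field_simp; ring
    linarith [e ▸ key]
  have hlb' : ∀ w : Z, g z - μ * L ^ 2 / 2 ≤ g w + (1 / (2 * μ')) * ‖w - z‖ ^ 2 := by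
    intro w
    refine le_trans (hlb w) ?_
    have : (1:ℝ) / (2 * μ) ≤ 1 / (2 * μ') := by
      apply one_div_le_one_div_of_le (by positivity); linarith
    nlinarith [sq_nonneg ‖w - z‖]
  have bdd : BddBelow (Set.range fun w : Z => g w + (1 / (2 * μ)) * ‖w - z‖ ^ 2) :=
    ⟨g z - μ * L ^ 2 / 2, by rintro _ ⟨w, rfl⟩; exact hlb w⟩
  have bdd' : BddBelow (Set.range fun w : Z => g w + (1 / (2 * μ')) * ‖w - z‖ ^ 2) :=
    ⟨g z - μ * L ^ 2 / 2, by rintro _ ⟨w, rfl⟩; exact hlb' w⟩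
  -- part 1
  have part1 : (⨅ w : Z, (g w + (1 / (2 * μ)) * ‖w - z‖ ^ 2)) ≤
      (⨅ w : Z, (g w + (1 / (2 * μ')) * ‖w - z‖ ^ 2)) := by
    apply ciInf_mono bdd
    intro w
    have : (1:ℝ) / (2 * μ) ≤ 1 / (2 * μ') := by
      apply one_div_le_one_div_of_le (by positivity); linarith
    nlinarith [sq_nonneg ‖w - z‖]
  -- key pointwise bound
  have key : ∀ w : Z, (⨅ w : Z, (g w + (1 / (2 * μ')) * ‖w - z‖ ^ 2)) ≤
      g w + (1 / (2 * μ)) * ‖w - z‖ ^ 2 + (μ - μ') * L ^ 2 / 2 := by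
    intro w
    set t : ℝ := ‖w - z‖ with ht
    set u : Z := z + (μ' / μ) • (w - z) with hu
    have h1 := ciInf_le bdd' u
    have hnorm : ‖u - z‖ = (μ' / μ) * t := by
      rw [hu]
      simp only [add_sub_cancel_left, norm_smul, Real.norm_eq_abs,
        abs_of_pos (div_pos hμ'pos hμpos)]
      rfl
    have hune : ‖u - w‖ = (1 - μ' / μ) * t := by
      have : u - w = (μ' / μ - 1) • (w - z) := by
        rw [hu]; rw [sub_smul, one_smul]; abel
      rw [this, norm_smul, Real.norm_eq_abs, abs_of_nonpos (by
        rw [sub_nonpos, div_le_one hμpos]; exact hle)]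
      ring
    have hg : g u ≤ g w + L * ((1 - μ' / μ) * t) := by
      have h := (abs_le.mp (hLip u w)).2
      rw [hune] at h; linarith
    have e1 : (1 / (2 * μ')) * ‖u - z‖ ^ 2 = (μ' / (2 * μ ^ 2)) * t ^ 2 := by
      rw [hnorm]; field_simp
    have harith : L * ((1 - μ' / μ) * t) + (μ' / (2 * μ ^ 2)) * t ^ 2 ≤
        (1 / (2 * μ)) * t ^ 2 + (μ - μ') * L ^ 2 / 2 := by
      have hpos : (0:ℝ) ≤ (μ - μ') * (t - μ * L) ^ 2 / (2 * μ ^ 2) :=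
        div_nonneg (mul_nonneg (by linarith) (sq_nonneg _)) (by positivity)
      have e : (1 / (2 * μ)) * t ^ 2 + (μ - μ') * L ^ 2 / 2
          - (L * ((1 - μ' / μ) * t) + (μ' / (2 * μ ^ 2)) * t ^ 2)
          = (μ - μ') * (t - μ * L) ^ 2 / (2 * μ ^ 2) := by
        field_simp; ring
      linarith [e ▸ hpos]
    calc (⨅ w : Z, (g w + (1 / (2 * μ')) * ‖w - z‖ ^ 2))
        ≤ g u + (1 / (2 * μ')) * ‖u - z‖ ^ 2 := h1
      _ = g u + (μ' / (2 * μ ^ 2)) * t ^ 2 := by rw [e1]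
      _ ≤ g w + (1 / (2 * μ)) * t ^ 2 + (μ - μ') * L ^ 2 / 2 := by linarith
  have part2a : (⨅ w : Z, (g w + (1 / (2 * μ')) * ‖w - z‖ ^ 2)) ≤
      (⨅ w : Z, (g w + (1 / (2 * μ)) * ‖w - z‖ ^ 2)) + (μ - μ') * L ^ 2 / 2 := by
    have := le_ciInf (fun w : Z =>
      (by linarith [key w] :
        (⨅ w : Z, (g w + (1 / (2 * μ')) * ‖w - z‖ ^ 2)) - (μ - μ') * L ^ 2 / 2
          ≤ g w + (1 / (2 * μ)) * ‖w - z‖ ^ 2))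
    linarith
  have hnum : (0:ℝ) ≤ (μ - μ') * L ^ 2 := by
    apply mul_nonneg (by linarith) (sq_nonneg _)
  have hstep : (μ - μ') * L ^ 2 / 2 ≤ (μ - μ') * L ^ 2 / (2 * (1 - μ * η) ^ 2) := by
    exact div_le_div_of_nonneg_left hnum (by positivity)
      (by nlinarith [mul_pos hμpos hη])
  refine ⟨part1, by linarith, ?_⟩
  have : (μ - μ') * L ^ 2 / (2 * (1 - μ * η) ^ 2) ≤ (μ - μ') * L ^ 2 / (1 / 2) := by
    exact div_le_div_of_nonneg_left hnum (by norm_num) (by nlinarith)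
  linarith [this, (by ring : (μ - μ') * L ^ 2 / (1/2) = 2 * (μ - μ') * L ^ 2)]
end
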